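/- Fix ℏ > 0, let ψ : ℝ → ℂ be a Schwartz function, and let φ(p) = (2πℏ)^{−1/2} ∫_ℝ ψ(x) exp(−i p x / ℏ) dx be its ℏ-scaled Fourier transform. Then for every p ∈ ℝ, the position marginal of the Wigner function recovers the momentum density: ∫_ℝ W_ψ(q, p) dq = |φ(p)|². -/

import Mathlib

open MeasureTheory

/-- The Wigner function of `ψ : ℝ → ℂ` (with Planck constant `h`):
`W_ψ(q,p) = (1/(2π)) ∫ conj(ψ(q + h s/2)) ψ(q − h s/2) e^{i p s} ds`. -/
noncomputable def wigner (h : ℝ) (ψ : ℝ → ℂ) (q p : ℝ) : ℂ :=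
  (1 / (2 * Real.pi) : ℂ) *
    ∫ s : ℝ, (starRingEnd ℂ) (ψ (q + h * s / 2)) * ψ (q - h * s / 2) *
      Complex.exp (Complex.I * (p : ℂ) * (s : ℂ))

lemma schwartz_decay_bound (ψ : SchwartzMap ℝ ℂ) :
    ∃ C : ℝ, 0 ≤ C ∧ ∀ x : ℝ, ‖ψ x‖ ≤ C / (1 + x ^ 2) ^ 2 := by
  obtain ⟨C0, -, h0⟩ := ψ.decay 0 0
  obtain ⟨C2, -, h2⟩ := ψ.decay 2 0
  obtain ⟨C4, -, h4⟩ := ψ.decay 4 0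
  refine ⟨max (C0 + 2 * C2 + C4) 0, le_max_right _ _, fun x => ?_⟩
  have hx : (0:ℝ) < (1 + x ^ 2) ^ 2 := by positivity
  rw [le_div_iff₀ hx]
  have h0' := h0 x; have h2' := h2 x; have h4' := h4 x
  simp only [norm_iteratedFDeriv_zero, pow_zero, one_mul] at h0' h2' h4'
  have e2 : ‖x‖ ^ 2 = x ^ 2 := by rw [Real.norm_eq_abs, sq_abs]
  have e4 : ‖x‖ ^ 4 = x ^ 4 := by
    rw [Real.norm_eq_abs]
    calc |x| ^ 4 = (|x| ^ 2) ^ 2 := by ring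
    _ = (x ^ 2) ^ 2 := by rw [sq_abs]
    _ = x ^ 4 := by ring
  rw [e2] at h2'; rw [e4] at h4'
  have hM := le_max_left (C0 + 2 * C2 + C4) (0:ℝ)
  nlinarith [norm_nonneg (ψ x), sq_nonneg x]

lemma base_integrable (a b C D : ℝ) (ha : a ≠ 0) (hb : b ≠ 0) :
    Integrable (fun z : ℝ × ℝ => (C * (1 + (a * z.1) ^ 2)⁻¹) * (D * (1 + (b * z.2) ^ 2)⁻¹))
      (volume.prod volume) :=
  ((integrable_inv_one_add_sq.comp_mul_left' ha).const_mul C).mul_prod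
    ((integrable_inv_one_add_sq.comp_mul_left' hb).const_mul D)

lemma ineqA (q a : ℝ) :
    (1 + q ^ 2) * (1 + (2 * a) ^ 2) ≤ 4 * ((1 + (q + a) ^ 2) * (1 + (q - a) ^ 2)) ^ 2 := by
  have h1 : 1 + q ^ 2 + a ^ 2 ≤ (1 + (q + a) ^ 2) * (1 + (q - a) ^ 2) := by
    nlinarith [sq_nonneg (q ^ 2 - a ^ 2)]
  have h2 : (1 + q ^ 2) * (1 + a ^ 2) ≤ (1 + q ^ 2 + a ^ 2) ^ 2 := by
    nlinarith [sq_nonneg q, sq_nonneg a, sq_nonneg (q * a)]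
  have h3 : (1 + q ^ 2 + a ^ 2) ^ 2 ≤ ((1 + (q + a) ^ 2) * (1 + (q - a) ^ 2)) ^ 2 := by
    apply pow_le_pow_left₀ (by positivity) h1
  nlinarith [sq_nonneg q, sq_nonneg a, sq_nonneg (q * a)]

lemma ineqB (t w : ℝ) :
    (1 + t ^ 2) * (1 + w ^ 2) ≤ 2 * ((1 + (t + w) ^ 2) * (1 + t ^ 2)) ^ 2 := by
  have h1 : 1 + (t + w) ^ 2 + t ^ 2 ≤ (1 + (t + w) ^ 2) * (1 + t ^ 2) := by
    nlinarith [sq_nonneg ((t + w) * t)]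
  have h2 : (1 + t ^ 2) * (1 + w ^ 2 / 2) ≤ (1 + (t + w) ^ 2 + t ^ 2) ^ 2 := by
    nlinarith [sq_nonneg (2 * t + w), sq_nonneg t, sq_nonneg w, sq_nonneg (t * w),
      sq_nonneg ((t + w) * t), sq_nonneg (t * (t + w) - w)]
  have h3 : (1 + (t + w) ^ 2 + t ^ 2) ^ 2 ≤ ((1 + (t + w) ^ 2) * (1 + t ^ 2)) ^ 2 := by
    apply pow_le_pow_left₀ (by positivity) h1
  nlinarith [sq_nonneg t, sq_nonneg w]

lemma norm_exp_Ips (p s : ℝ) : ‖Complex.exp (Complex.I * p * s)‖ = 1 := by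
  rw [Complex.norm_exp]
  simp [Complex.mul_re]

lemma integrableA (ℏ : ℝ) (hℏ : 0 < ℏ) (ψ : SchwartzMap ℝ ℂ) (p : ℝ) :
    Integrable (Function.uncurry fun q s : ℝ =>
      (starRingEnd ℂ) (ψ (q + ℏ * s / 2)) * ψ (q - ℏ * s / 2) *
        Complex.exp (Complex.I * p * s)) (volume.prod volume) := by
  obtain ⟨C, hC0, hC⟩ := schwartz_decay_bound ψ
  refine Integrable.mono'
    (g := fun z : ℝ × ℝ => ((2 * C) * (1 + (1 * z.1) ^ 2)⁻¹) * ((2 * C) * (1 + (ℏ * z.2) ^ 2)⁻¹))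
    (base_integrable 1 ℏ (2 * C) (2 * C) one_ne_zero hℏ.ne') ?_ ?_
  · apply Continuous.aestronglyMeasurable
    refine Continuous.mul (Continuous.mul ?_ ?_) ?_
    · exact Complex.continuous_conj.comp (ψ.continuous.comp (by continuity))
    · exact ψ.continuous.comp (by continuity)
    · exact Complex.continuous_exp.comp (by continuity)
  · refine Filter.Eventually.of_forall fun z => ?_
    obtain ⟨q, s⟩ := z
    simp only [Function.uncurry, norm_mul, norm_exp_Ips, mul_one, RCLike.norm_conj]
    have hu := hC (q + ℏ * s / 2)
    have hv := hC (q - ℏ * s / 2)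
    have key : C / (1 + (q + ℏ * s / 2) ^ 2) ^ 2 * (C / (1 + (q - ℏ * s / 2) ^ 2) ^ 2)
        ≤ (2 * C) * (1 + (1 * q) ^ 2)⁻¹ * ((2 * C) * (1 + (ℏ * s) ^ 2)⁻¹) := by
      have h1 : (0:ℝ) < (1 + (q + ℏ * s / 2) ^ 2) ^ 2 * (1 + (q - ℏ * s / 2) ^ 2) ^ 2 := by
        positivity
      have h2 : (0:ℝ) < (1 + (1 * q) ^ 2) * (1 + (ℏ * s) ^ 2) := by positivity
      have hrw : (2 * C) * (1 + (1 * q) ^ 2)⁻¹ * ((2 * C) * (1 + (ℏ * s) ^ 2)⁻¹)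
          = (4 * C ^ 2) / ((1 + (1 * q) ^ 2) * (1 + (ℏ * s) ^ 2)) := by
        field_simp; ring
      rw [div_mul_div_comm, hrw, div_le_div_iff₀ h1 h2]
      have := ineqA q (ℏ * s / 2)
      have harg : 2 * (ℏ * s / 2) = ℏ * s := by ring
      rw [harg] at this
      nlinarith [sq_nonneg C, mul_le_mul_of_nonneg_left this (mul_self_nonneg C)]
    calc ‖ψ (q + ℏ * s / 2)‖ * ‖ψ (q - ℏ * s / 2)‖
        ≤ C / (1 + (q + ℏ * s / 2) ^ 2) ^ 2 * (C / (1 + (q - ℏ * s / 2) ^ 2) ^ 2) := by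
          apply mul_le_mul hu hv (norm_nonneg _) (by positivity)
      _ ≤ _ := key

lemma integrableB (ℏ : ℝ) (hℏ : 0 < ℏ) (ψ : SchwartzMap ℝ ℂ) (p : ℝ) :
    Integrable (Function.uncurry fun s t : ℝ =>
      (starRingEnd ℂ) (ψ (t + ℏ * s)) * ψ t * Complex.exp (Complex.I * p * s))
      (volume.prod volume) := by
  obtain ⟨C, hC0, hC⟩ := schwartz_decay_bound ψ
  refine Integrable.mono'
    (g := fun z : ℝ × ℝ => ((2 * C ^ 2) * (1 + (ℏ * z.1) ^ 2)⁻¹) * (1 * (1 + (1 * z.2) ^ 2)⁻¹))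
    (base_integrable ℏ 1 (2 * C ^ 2) 1 hℏ.ne' one_ne_zero) ?_ ?_
  · apply Continuous.aestronglyMeasurable
    refine Continuous.mul (Continuous.mul ?_ ?_) ?_
    · exact Complex.continuous_conj.comp (ψ.continuous.comp (by continuity))
    · exact ψ.continuous.comp (by continuity)
    · exact Complex.continuous_exp.comp (by continuity)
  · refine Filter.Eventually.of_forall fun z => ?_
    obtain ⟨s, t⟩ := z
    simp only [Function.uncurry, norm_mul, norm_exp_Ips, mul_one, RCLike.norm_conj]
    have hu := hC (t + ℏ * s)
    have hv := hC t
    have key : C / (1 + (t + ℏ * s) ^ 2) ^ 2 * (C / (1 + t ^ 2) ^ 2)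
        ≤ (2 * C ^ 2) * (1 + (ℏ * s) ^ 2)⁻¹ * (1 * (1 + (1 * t) ^ 2)⁻¹) := by
      have h1 : (0:ℝ) < (1 + (t + ℏ * s) ^ 2) ^ 2 * (1 + t ^ 2) ^ 2 := by positivity
      have h2 : (0:ℝ) < (1 + (ℏ * s) ^ 2) * (1 + (1 * t) ^ 2) := by positivity
      have hrw : (2 * C ^ 2) * (1 + (ℏ * s) ^ 2)⁻¹ * (1 * (1 + (1 * t) ^ 2)⁻¹)
          = (2 * C ^ 2) / ((1 + (ℏ * s) ^ 2) * (1 + (1 * t) ^ 2)) := by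
        field_simp
      rw [div_mul_div_comm, hrw, div_le_div_iff₀ h1 h2]
      have := ineqB t (ℏ * s)
      nlinarith [sq_nonneg C, mul_le_mul_of_nonneg_left this (mul_self_nonneg C)]
    calc ‖ψ (t + ℏ * s)‖ * ‖ψ t‖
        ≤ C / (1 + (t + ℏ * s) ^ 2) ^ 2 * (C / (1 + t ^ 2) ^ 2) := by
          apply mul_le_mul hu hv (norm_nonneg _) (by positivity)
      _ ≤ _ := key

/-- For `ℏ > 0`, a Schwartz function `ψ`, and its `ℏ`-scaled Fourier transform
`φ(p) = (2πℏ)^{-1/2} ∫ ψ(x) e^{-i p x / ℏ} dx`, the position marginal of the Wigner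
function recovers the momentum density: `∫ W_ψ(q, p) dq = |φ(p)|²` for every `p`. -/
theorem stmt_15 (ℏ : ℝ) (hℏ : 0 < ℏ) (ψ : SchwartzMap ℝ ℂ) (φ : ℝ → ℂ)
    (hφ : ∀ p : ℝ, φ p = ((1 / Real.sqrt (2 * Real.pi * ℏ) : ℝ) : ℂ) *
      ∫ x : ℝ, ψ x * Complex.exp (-(Complex.I * (p : ℂ) * (x : ℂ)) / (ℏ : ℂ)))
    (p : ℝ) :
    ∫ q : ℝ, wigner ℏ ψ q p = ((‖φ p‖ ^ 2 : ℝ) : ℂ) := by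
  have hℏ' : (ℏ : ℂ) ≠ 0 := Complex.ofReal_ne_zero.mpr hℏ.ne'
  set I : ℂ := ∫ x : ℝ, ψ x * Complex.exp (-(Complex.I * p * x) / ℏ) with hIdef
  set g : ℝ → ℂ := fun u => (starRingEnd ℂ) (ψ u) * Complex.exp (Complex.I * p * u / ℏ)
    with hgdef
  have hgint : ∫ u : ℝ, g u = (starRingEnd ℂ) I := by
    rw [hIdef, ← integral_conj]
    refine integral_congr_ae (Filter.Eventually.of_forall fun u => ?_)
    simp only [hgdef, map_mul, ← Complex.exp_conj]
    congr 2
    simp only [map_div₀, map_neg, map_mul, Complex.conj_I, Complex.conj_ofReal]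
    ring
  -- step 6: inner integral over s for fixed t
  have inner2 : ∀ t : ℝ, (∫ s : ℝ, (starRingEnd ℂ) (ψ (t + ℏ * s)) * ψ t *
      Complex.exp (Complex.I * p * s))
      = (ℏ⁻¹ : ℝ) • ((ψ t * Complex.exp (-(Complex.I * p * t) / ℏ)) * (starRingEnd ℂ) I) := by
    intro t
    have hcomp : (∫ s : ℝ, g (t + ℏ * s)) = (ℏ⁻¹ : ℝ) • (starRingEnd ℂ) I := by
      calc (∫ s : ℝ, g (t + ℏ * s)) = ∫ s : ℝ, (fun u => g (u + t)) (ℏ * s) := by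
            congr 1; funext s; simp only [add_comm]
        _ = |ℏ⁻¹| • ∫ u : ℝ, g (u + t) := Measure.integral_comp_mul_left (fun u => g (u + t)) ℏ
        _ = |ℏ⁻¹| • ∫ u : ℝ, g u := by rw [integral_add_right_eq_self]
        _ = (ℏ⁻¹ : ℝ) • (starRingEnd ℂ) I := by
            rw [hgint, abs_of_pos (inv_pos.2 hℏ)]
    calc (∫ s : ℝ, (starRingEnd ℂ) (ψ (t + ℏ * s)) * ψ t * Complex.exp (Complex.I * p * s))
        = ∫ s : ℝ, (ψ t * Complex.exp (-(Complex.I * p * t) / ℏ)) * g (t + ℏ * s) := by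
          refine integral_congr_ae (Filter.Eventually.of_forall fun s => ?_)
          simp only [hgdef]
          have hexp : Complex.exp (Complex.I * p * s)
              = Complex.exp (-(Complex.I * p * t) / ℏ) *
                Complex.exp (Complex.I * p * (((t + ℏ * s : ℝ) : ℂ)) / ℏ) := by
            rw [← Complex.exp_add]
            congr 1
            push_cast
            field_simp
            ring
          rw [hexp]; ring
      _ = (ψ t * Complex.exp (-(Complex.I * p * t) / ℏ)) * ∫ s : ℝ, g (t + ℏ * s) :=
          integral_const_mul _ _
      _ = (ℏ⁻¹ : ℝ) • ((ψ t * Complex.exp (-(Complex.I * p * t) / ℏ)) * (starRingEnd ℂ) I) := by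
          rw [hcomp]; simp only [Complex.real_smul]; ring
  -- step 3: shift in q for fixed s
  have inner1 : ∀ s : ℝ, (∫ q : ℝ, (starRingEnd ℂ) (ψ (q + ℏ * s / 2)) * ψ (q - ℏ * s / 2) *
      Complex.exp (Complex.I * p * s))
      = ∫ t : ℝ, (starRingEnd ℂ) (ψ (t + ℏ * s)) * ψ t * Complex.exp (Complex.I * p * s) := by
    intro s
    rw [← integral_sub_right_eq_self (μ := volume)
      (fun t : ℝ => (starRingEnd ℂ) (ψ (t + ℏ * s)) * ψ t * Complex.exp (Complex.I * p * s))
      (ℏ * s / 2)]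
    congr 1; funext q
    rw [show q - ℏ * s / 2 + ℏ * s = q + ℏ * s / 2 by ring]
  have hr : (1 / Real.sqrt (2 * Real.pi * ℏ)) ^ 2 = 1 / (2 * Real.pi * ℏ) := by
    rw [div_pow, one_pow, Real.sq_sqrt (by positivity)]
  have hnφ : ‖φ p‖ ^ 2 = 1 / (2 * Real.pi * ℏ) * ‖I‖ ^ 2 := by
    rw [hφ p, ← hIdef, norm_mul, mul_pow, Complex.norm_real, Real.norm_eq_abs,
      abs_of_nonneg (by positivity), hr]
  have hIconj : I * (starRingEnd ℂ) I = ((‖I‖ ^ 2 : ℝ) : ℂ) := by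
    rw [Complex.mul_conj, Complex.normSq_eq_norm_sq]
  calc ∫ q : ℝ, wigner ℏ ψ q p
      = (1 / (2 * Real.pi) : ℂ) * ∫ q : ℝ, ∫ s : ℝ,
          (starRingEnd ℂ) (ψ (q + ℏ * s / 2)) * ψ (q - ℏ * s / 2) *
            Complex.exp (Complex.I * p * s) := by
        simp only [wigner]; rw [integral_const_mul]
    _ = (1 / (2 * Real.pi) : ℂ) * ∫ s : ℝ, ∫ q : ℝ,
          (starRingEnd ℂ) (ψ (q + ℏ * s / 2)) * ψ (q - ℏ * s / 2) *
            Complex.exp (Complex.I * p * s) := by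
        rw [integral_integral_swap (integrableA ℏ hℏ ψ p)]
    _ = (1 / (2 * Real.pi) : ℂ) * ∫ s : ℝ, ∫ t : ℝ,
          (starRingEnd ℂ) (ψ (t + ℏ * s)) * ψ t * Complex.exp (Complex.I * p * s) := by
        congr 1
        exact integral_congr_ae (Filter.Eventually.of_forall inner1)
    _ = (1 / (2 * Real.pi) : ℂ) * ∫ t : ℝ, ∫ s : ℝ,
          (starRingEnd ℂ) (ψ (t + ℏ * s)) * ψ t * Complex.exp (Complex.I * p * s) := by
        rw [integral_integral_swap (integrableB ℏ hℏ ψ p)]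
    _ = (1 / (2 * Real.pi) : ℂ) * ∫ t : ℝ, (ℏ⁻¹ : ℝ) •
          ((ψ t * Complex.exp (-(Complex.I * p * t) / ℏ)) * (starRingEnd ℂ) I) := by
        congr 1
        exact integral_congr_ae (Filter.Eventually.of_forall inner2)
    _ = (1 / (2 * Real.pi) : ℂ) * ((ℏ⁻¹ : ℝ) •
          ((∫ t : ℝ, ψ t * Complex.exp (-(Complex.I * p * t) / ℏ)) * (starRingEnd ℂ) I)) := by
        rw [integral_smul, integral_mul_const]
    _ = (1 / (2 * Real.pi) : ℂ) * ((ℏ⁻¹ : ℝ) • (I * (starRingEnd ℂ) I)) := by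
        rw [← hIdef]
    _ = ((‖φ p‖ ^ 2 : ℝ) : ℂ) := by
        rw [hIconj, hnφ, Complex.real_smul]
        push_cast
        have hπ : (Real.pi : ℂ) ≠ 0 := Complex.ofReal_ne_zero.mpr Real.pi_ne_zero
        field_simp
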